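/- In the setting of the map D(·), assume in addition that λ has linear growth, i.e. there is K > 0 with sup{‖x‖ : x ∈ λ(y)} ≤ K(1+‖y‖) for all y, and that λ has closed graph, i.e. whenever yₙ → y in ℝ^{d₂} and xₙ ∈ λ(yₙ) with xₙ → x, then x ∈ λ(y). Then the map y ↦ D(y) has closed graph: for every sequence yₙ → y in ℝ^{d₂} and every sequence μⁿ ∈ D(yₙ) converging weakly to μ in P(ℝ^{d₁} × S), one has μ ∈ D(y). -/

import Mathlib

open MeasureTheory Metric Filter Topology
open scoped Pointwise NNReal ENNReal RealInnerProductSpace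

abbrev Euc (n : ℕ) : Type := EuclideanSpace ℝ (Fin n)

open scoped BoundedContinuousFunction

lemma aux_meas {α S : Type*} [MeasurableSpace α] [TopologicalSpace α] [OpensMeasurableSpace α]
    [MetricSpace S] [MeasurableSpace S] [BorelSpace S]
    (h : α → ProbabilityMeasure S) (hc : Continuous h) :
    Measurable (fun a => (h a : Measure S)) := by
  apply Measure.measurable_of_measurable_coe
  have key : ∀ f : S →ᵇ ℝ≥0, Measurable fun a => ∫⁻ x, f x ∂(h a : Measure S) := by
    intro f
    have c1 : Continuous fun a => ((h a).toFiniteMeasure.testAgainstNN f : ℝ≥0∞) :=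
      ENNReal.continuous_coe.comp ((ProbabilityMeasure.continuous_testAgainstNN_eval f).comp hc)
    have e : (fun a => ∫⁻ x, f x ∂(h a : Measure S))
        = fun a => ((h a).toFiniteMeasure.testAgainstNN f : ℝ≥0∞) := by
      funext a; rw [FiniteMeasure.testAgainstNN_coe_eq]; rfl
    rw [e]; exact c1.measurable
  intro s hs
  refine MeasurableSpace.induction_on_inter
    (C := fun s _ => Measurable fun a => (h a : Measure S) s)
    (BorelSpace.measurable_eq.trans borel_eq_generateFrom_isClosed)
    isPiSystem_isClosed ?_ ?_ ?_ ?_ _ hs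
  · simp only [measure_empty]; exact measurable_const
  · intro F hF
    simp only [Set.mem_setOf_eq] at hF
    apply measurable_of_tendsto_metrizable
      (f := fun n a => ∫⁻ x, hF.apprSeq n x ∂(h a : Measure S)) (fun n => key _)
    exact tendsto_pi_nhds.mpr fun a => HasOuterApproxClosed.tendsto_lintegral_apprSeq hF _
  · intro t ht hmeas
    have e : (fun a => (h a : Measure S) tᶜ) = fun a => 1 - (h a : Measure S) t := by
      funext a
      rw [measure_compl ht (measure_ne_top _ _), measure_univ]
    rw [e]; exact hmeas.const_sub 1
  · intro f hdisj hf hmeas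
    have e : (fun a => (h a : Measure S) (⋃ i, f i)) = fun a => ∑' i, (h a : Measure S) (f i) := by
      funext a; exact measure_iUnion hdisj hf
    rw [e]; exact Measurable.ennreal_tsum hmeas

lemma aux_ev {E G : Type*} [NormedAddCommGroup E] [MetricSpace G] [ProperSpace E]
    (lam : G → Set E) (y : G) (yn : ℕ → G) (hy : Tendsto yn atTop (𝓝 y))
    (R : ℝ) (hbd : ∀ n, ∀ x ∈ lam (yn n), ‖x‖ ≤ R)
    (hlamgraph : ∀ (yn' : ℕ → G) (xn : ℕ → E) (x : E),
      Tendsto yn' atTop (𝓝 y) → (∀ n, xn n ∈ lam (yn' n)) → Tendsto xn atTop (𝓝 x) →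
      x ∈ lam y)
    {ε : ℝ} (hε : 0 < ε) :
    ∀ᶠ n in atTop, lam (yn n) ⊆ {x | infDist x (lam y) ≤ ε} := by
  by_contra hcon
  rw [Filter.not_eventually] at hcon
  have hcon' : ∃ᶠ n in atTop, ∃ x ∈ lam (yn n), ε < infDist x (lam y) := by
    refine hcon.mono fun n hn => ?_
    obtain ⟨x, hx1, hx2⟩ := Set.not_subset.mp hn
    exact ⟨x, hx1, lt_of_not_ge hx2⟩
  obtain ⟨φ, hφ, hP⟩ := Filter.extraction_of_frequently_atTop hcon'
  set x : ℕ → E := fun n => (hP n).choose with hxdef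
  have hx1 : ∀ n, x n ∈ lam (yn (φ n)) := fun n => (hP n).choose_spec.1
  have hx2 : ∀ n, ε < infDist (x n) (lam y) := fun n => (hP n).choose_spec.2
  have hxball : ∀ n, x n ∈ closedBall (0 : E) R := fun n => by
    simpa [mem_closedBall_zero_iff] using hbd (φ n) _ (hx1 n)
  obtain ⟨a, _, ψ, hψ, hxa⟩ := tendsto_subseq_of_bounded isBounded_closedBall hxball
  have ha : a ∈ lam y := by
    refine hlamgraph (yn ∘ (φ ∘ ψ)) (x ∘ ψ) a (hy.comp ((hφ.comp hψ).tendsto_atTop)) ?_ hxa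
    exact fun n => hx1 (ψ n)
  have hd : Tendsto (fun n => infDist (x (ψ n)) (lam y)) atTop (𝓝 (infDist a (lam y))) :=
    ((continuous_infDist_pt (lam y)).tendsto a).comp hxa
  have : ε ≤ infDist a (lam y) :=
    le_of_tendsto_of_tendsto tendsto_const_nhds hd (Eventually.of_forall fun n => (hx2 (ψ n)).le)
  rw [infDist_zero_of_mem ha] at this
  linarith

lemma aux_lim {X : Type*} [MetricSpace X] [MeasurableSpace X] [OpensMeasurableSpace X]
    (μn : ℕ → ProbabilityMeasure X) (μ : ProbabilityMeasure X)
    (hlim : Tendsto μn atTop (𝓝 μ))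
    (gn : ℕ → X →ᵇ ℝ≥0) (g : X →ᵇ ℝ≥0)
    (hae : ∀ ε : ℝ≥0, 0 < ε → ∀ᶠ n in atTop, ∀ᵐ q ∂(μn n : Measure X),
      gn n q ≤ g q + ε ∧ g q ≤ gn n q + ε) :
    Tendsto (fun n => ∫⁻ x, gn n x ∂(μn n : Measure X)) atTop
      (𝓝 (∫⁻ x, g x ∂(μ : Measure X))) := by
  set A : ℕ → ℝ≥0∞ := fun n => ∫⁻ x, gn n x ∂(μn n : Measure X) with hA
  set B : ℕ → ℝ≥0∞ := fun n => ∫⁻ x, g x ∂(μn n : Measure X) with hB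
  set L : ℝ≥0∞ := ∫⁻ x, g x ∂(μ : Measure X) with hL
  have hLne : L ≠ ⊤ := (g.lintegral_lt_top_of_nnreal _).ne
  have hBlim : Tendsto B atTop (𝓝 L) :=
    MeasureTheory.ProbabilityMeasure.tendsto_iff_forall_lintegral_tendsto.mp hlim g
  have hAB : ∀ ε : ℝ≥0, 0 < ε → ∀ᶠ n in atTop, A n ≤ B n + ε ∧ B n ≤ A n + ε := by
    intro ε hε
    refine (hae ε hε).mono fun n hn => ?_
    constructor
    · calc A n ≤ ∫⁻ x, (g x + ε : ℝ≥0) ∂(μn n : Measure X) := by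
            refine lintegral_mono_ae (hn.mono fun q hq => ?_)
            exact_mod_cast ENNReal.coe_le_coe.mpr hq.1
        _ ≤ B n + ε := by
            simp_rw [ENNReal.coe_add]
            rw [lintegral_add_right _ measurable_const, lintegral_const, measure_univ, mul_one]
    · calc B n ≤ ∫⁻ x, (gn n x + ε : ℝ≥0) ∂(μn n : Measure X) := by
            refine lintegral_mono_ae (hn.mono fun q hq => ?_)
            exact_mod_cast ENNReal.coe_le_coe.mpr hq.2
        _ ≤ A n + ε := by
            simp_rw [ENNReal.coe_add]
            rw [lintegral_add_right _ measurable_const, lintegral_const, measure_univ, mul_one]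
  have hlimsup : limsup A atTop ≤ L := by
    refine ENNReal.le_of_forall_pos_le_add fun ε hε _ => ?_
    have h1 : Tendsto (fun n => B n + (ε : ℝ≥0∞)) atTop (𝓝 (L + ε)) :=
      hBlim.add tendsto_const_nhds
    calc limsup A atTop ≤ limsup (fun n => B n + (ε : ℝ≥0∞)) atTop :=
          limsup_le_limsup (((hAB ε hε).mono fun n hn => hn.1))
      _ = L + ε := h1.limsup_eq
  have hliminf : L ≤ liminf A atTop := by
    have hlt : liminf A atTop < ⊤ :=
      lt_of_le_of_lt (liminf_le_limsup) (lt_of_le_of_lt hlimsup hLne.lt_top)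
    refine ENNReal.le_of_forall_pos_le_add fun ε hε _ => ?_
    have h1 : Tendsto (fun n => B n - (ε : ℝ≥0∞)) atTop (𝓝 (L - ε)) :=
      ENNReal.Tendsto.sub hBlim tendsto_const_nhds (Or.inr ENNReal.coe_ne_top)
    have h2 : L - ε ≤ liminf A atTop := by
      calc L - ε = liminf (fun n => B n - (ε : ℝ≥0∞)) atTop := h1.liminf_eq.symm
        _ ≤ liminf A atTop := by
            refine liminf_le_liminf (((hAB ε hε).mono fun n hn => ?_))
            exact tsub_le_iff_right.mpr hn.2
    calc L ≤ L - ε + ε := le_tsub_add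
      _ ≤ liminf A atTop + ε := add_le_add_left h2 ε
  exact tendsto_of_le_liminf_of_limsup_le hliminf hlimsup

/-- If `λ` has linear growth and closed graph, then the map `y ↦ D(y)` has
closed graph: `yₙ → y`, `μⁿ ∈ D(yₙ)`, `μⁿ → μ` weakly imply `μ ∈ D(y)`. -/
theorem Dmap_closedGraph
    (d₁ d₂ : ℕ) (hd₁ : 0 < d₁) (hd₂ : 0 < d₂)
    (S : Type) [MetricSpace S] [CompactSpace S] [MeasurableSpace S] [BorelSpace S]
    (Pi : (Euc d₁ × Euc d₂) → S → ProbabilityMeasure S)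
    (hPi : Continuous (fun q : (Euc d₁ × Euc d₂) × S => Pi q.1 q.2))
    (lam : Euc d₂ → Set (Euc d₁))
    (hlamne : ∀ y, (lam y).Nonempty) (hlamcomp : ∀ y, IsCompact (lam y))
    -- linear growth of λ
    (K : ℝ) (hK : 0 < K)
    (hgrow : ∀ y, ∀ x ∈ lam y, ‖x‖ ≤ K * (1 + ‖y‖))
    -- closed graph of λ
    (hlamgraph : ∀ (y : Euc d₂) (yn : ℕ → Euc d₂) (xn : ℕ → Euc d₁) (x : Euc d₁),
      Tendsto yn atTop (𝓝 y) → (∀ n, xn n ∈ lam (yn n)) → Tendsto xn atTop (𝓝 x) →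
      x ∈ lam y) :
    let D : Euc d₂ → Set (ProbabilityMeasure (Euc d₁ × S)) := fun y =>
      {μ | (μ : Measure (Euc d₁ × S)) (lam y ×ˢ (Set.univ : Set S)) = 1 ∧
        ∀ A : Set S, MeasurableSet A →
          ((μ : Measure (Euc d₁ × S)).map Prod.snd) A =
            ∫⁻ q, (Pi (q.1, y) q.2 : Measure S) A ∂(μ : Measure (Euc d₁ × S))}
    ∀ (y : Euc d₂) (yn : ℕ → Euc d₂) (μn : ℕ → ProbabilityMeasure (Euc d₁ × S))
      (μ : ProbabilityMeasure (Euc d₁ × S)),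
      Tendsto yn atTop (𝓝 y) → (∀ n, μn n ∈ D (yn n)) → Tendsto μn atTop (𝓝 μ) →
      μ ∈ D y := by
  intro D y yn μn μ hy hμn hlim
  obtain ⟨M, hM⟩ := isBounded_iff_forall_norm_le.mp hy.isCompact_insert_range.isBounded
  have hMyn : ∀ n, ‖yn n‖ ≤ M := fun n => hM _ (Set.mem_insert_of_mem _ ⟨n, rfl⟩)
  have hMy : ‖y‖ ≤ M := hM y (Set.mem_insert _ _)
  set R : ℝ := K * (1 + M) with hR
  have hsub : ∀ z : Euc d₂, ‖z‖ ≤ M → lam z ⊆ closedBall (0 : Euc d₁) R := by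
    intro z hz x hx
    rw [mem_closedBall_zero_iff]
    calc ‖x‖ ≤ K * (1 + ‖z‖) := hgrow z x hx
      _ ≤ R := by
          rw [hR]
          have : (1:ℝ) + ‖z‖ ≤ 1 + M := by linarith
          nlinarith
  have hbd : ∀ n, ∀ x ∈ lam (yn n), ‖x‖ ≤ R := fun n x hx =>
    mem_closedBall_zero_iff.mp (hsub _ (hMyn n) hx)
  have hμn1 : ∀ n, (μn n : Measure (Euc d₁ × S)) (lam (yn n) ×ˢ (Set.univ : Set S)) = 1 :=
    fun n => (hμn n).1
  -- Part 1
  have hone : ∀ ε : ℝ, 0 < ε →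
      (μ : Measure (Euc d₁ × S)) ({x | infDist x (lam y) ≤ ε} ×ˢ (Set.univ : Set S)) = 1 := by
    intro ε hε
    have hclosed : IsClosed ({x : Euc d₁ | infDist x (lam y) ≤ ε} ×ˢ (Set.univ : Set S)) :=
      (isClosed_le (continuous_infDist_pt _) continuous_const).prod isClosed_univ
    have hev : ∀ᶠ n in atTop,
        (μn n : Measure (Euc d₁ × S)) ({x | infDist x (lam y) ≤ ε} ×ˢ (Set.univ : Set S)) = 1 := by
      refine (aux_ev lam y yn hy R hbd (fun a b c h1 h2 h3 => hlamgraph y a b c h1 h2 h3) hε).mono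
        fun n hn => ?_
      refine le_antisymm prob_le_one ?_
      calc (1:ℝ≥0∞) = (μn n : Measure (Euc d₁ × S)) (lam (yn n) ×ˢ (Set.univ : Set S)) :=
            (hμn1 n).symm
        _ ≤ _ := measure_mono (Set.prod_mono hn subset_rfl)
    have hls := ProbabilityMeasure.limsup_measure_closed_le_of_tendsto hlim hclosed
    have heq : limsup (fun n =>
        (μn n : Measure (Euc d₁ × S)) ({x | infDist x (lam y) ≤ ε} ×ˢ (Set.univ : Set S)))
        atTop = 1 := by
      rw [limsup_congr hev]
      exact limsup_const 1
    refine le_antisymm prob_le_one ?_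
    rw [← heq]
    exact hls
  have part1 : (μ : Measure (Euc d₁ × S)) (lam y ×ˢ (Set.univ : Set S)) = 1 := by
    set s : ℕ → Set (Euc d₁ × S) :=
      fun k => {x | infDist x (lam y) ≤ 1/(k+1)} ×ˢ (Set.univ : Set S) with hs
    have hsc : ∀ k, IsClosed (s k) := fun k =>
      (isClosed_le (continuous_infDist_pt _) continuous_const).prod isClosed_univ
    have hanti : Antitone s := by
      intro k m hkm
      have hk : (0:ℝ) < (k:ℝ) + 1 := by positivity
      have hm : (k:ℝ) + 1 ≤ (m:ℝ) + 1 := by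
        have : (k:ℝ) ≤ m := Nat.cast_le.mpr hkm
        linarith
      rintro ⟨a, b⟩ ⟨ha, hb⟩
      exact ⟨le_trans ha (one_div_le_one_div_of_le hk hm), hb⟩
    have hInter : ⋂ k, s k = lam y ×ˢ (Set.univ : Set S) := by
      ext p
      simp only [hs, Set.mem_iInter, Set.mem_prod, Set.mem_univ, and_true, Set.mem_setOf_eq]
      constructor
      · intro h
        have h0 : infDist p.1 (lam y) ≤ 0 :=
          ge_of_tendsto' tendsto_one_div_add_atTop_nhds_zero_nat fun k => h k
        have h00 : infDist p.1 (lam y) = 0 := le_antisymm h0 infDist_nonneg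
        rw [← (hlamcomp y).isClosed.closure_eq]
        exact (mem_closure_iff_infDist_zero (hlamne y)).mpr h00
      · intro h k
        rw [infDist_zero_of_mem h]
        positivity
    have htend := tendsto_measure_iInter_atTop (μ := (μ : Measure (Euc d₁ × S)))
      (fun k => ((hsc k).measurableSet).nullMeasurableSet) hanti
      ⟨0, measure_ne_top _ _⟩
    rw [hInter] at htend
    have hconst : Tendsto (fun _ : ℕ => (1:ℝ≥0∞)) atTop (𝓝 1) := tendsto_const_nhds
    exact tendsto_nhds_unique htend
      (hconst.congr fun k => (hone (1/(k+1)) (by positivity)).symm)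
  -- Part 2
  have hfm : ∀ f : S →ᵇ ℝ≥0, Measurable fun x : S => (f x : ℝ≥0∞) := fun f =>
    measurable_coe_nnreal_ennreal.comp f.continuous.measurable
  have hκmeas : ∀ z : Euc d₂, Measurable (fun q : Euc d₁ × S => (Pi (q.1, z) q.2 : Measure S)) := by
    intro z
    exact aux_meas (fun q : Euc d₁ × S => Pi (q.1, z) q.2)
      (hPi.comp (((continuous_fst.prodMk continuous_const)).prodMk continuous_snd))
  have hbindn : ∀ n, ((μn n : Measure (Euc d₁ × S)).map Prod.snd)
      = (μn n : Measure (Euc d₁ × S)).bind (fun q => (Pi (q.1, yn n) q.2 : Measure S)) := by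
    intro n
    refine Measure.ext fun A hA => ?_
    rw [Measure.bind_apply hA (hκmeas (yn n)).aemeasurable]
    exact (hμn n).2 A hA
  have hbind : ((μ : Measure (Euc d₁ × S)).map Prod.snd)
      = (μ : Measure (Euc d₁ × S)).bind (fun q => (Pi (q.1, y) q.2 : Measure S)) := by
    haveI hfin1 : IsProbabilityMeasure ((μ : Measure (Euc d₁ × S)).map Prod.snd) :=
      Measure.isProbabilityMeasure_map measurable_snd.aemeasurable
    refine ext_of_forall_lintegral_eq_of_IsFiniteMeasure ?_
    intro f
    -- joint continuity of the test-against map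
    have hHcont : Continuous (fun p : Euc d₂ × (Euc d₁ × S) =>
        (Pi (p.2.1, p.1) p.2.2).toFiniteMeasure.testAgainstNN f) :=
      (FiniteMeasure.continuous_testAgainstNN_eval f).comp
        (ProbabilityMeasure.toFiniteMeasure_continuous.comp
          (hPi.comp ((continuous_snd.fst.prodMk continuous_fst).prodMk continuous_snd.snd)))
    set C : ℝ≥0 := nndist f 0 with hC
    have hHle : ∀ ν : ProbabilityMeasure S, ν.toFiniteMeasure.testAgainstNN f ≤ C := by
      intro ν
      rw [← ENNReal.coe_le_coe, FiniteMeasure.testAgainstNN_coe_eq]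
      rw [ProbabilityMeasure.toMeasure_comp_toFiniteMeasure_eq_toMeasure]
      calc ∫⁻ x, f x ∂(ν : Measure S)
          ≤ edist 0 f * (ν : Measure S) Set.univ :=
            BoundedContinuousFunction.lintegral_le_edist_mul f _
        _ = C := by
            rw [measure_univ, mul_one, edist_nndist, nndist_comm]
    set G : Euc d₂ → (Euc d₁ × S) →ᵇ ℝ≥0 := fun z =>
      BoundedContinuousFunction.mkOfBound
        ⟨fun q => (Pi (q.1, z) q.2).toFiniteMeasure.testAgainstNN f,
          hHcont.comp (Continuous.prodMk_right z)⟩ C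
        (by
          intro p q
          have hp := hHle (Pi (p.1, z) p.2)
          have hq := hHle (Pi (q.1, z) q.2)
          simp only [ContinuousMap.coe_mk]
          rw [NNReal.dist_eq, abs_sub_le_iff]
          constructor
          · have := (NNReal.coe_le_coe.mpr hp)
            have h0 : (0:ℝ) ≤ ((Pi (q.1, z) q.2).toFiniteMeasure.testAgainstNN f : ℝ≥0) :=
              NNReal.coe_nonneg _
            linarith
          · have := (NNReal.coe_le_coe.mpr hq)
            have h0 : (0:ℝ) ≤ ((Pi (p.1, z) p.2).toFiniteMeasure.testAgainstNN f : ℝ≥0) :=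
              NNReal.coe_nonneg _
            linarith) with hG
    have hGval : ∀ z q, G z q = (Pi (q.1, z) q.2).toFiniteMeasure.testAgainstNN f := fun z q => rfl
    have hGcoe : ∀ z (q : Euc d₁ × S),
        ((G z q : ℝ≥0) : ℝ≥0∞) = ∫⁻ x, f x ∂(Pi (q.1, z) q.2 : Measure S) := by
      intro z q
      rw [hGval]
      exact FiniteMeasure.testAgainstNN_coe_eq
    -- identity for each n
    have hchain : ∀ n, ∫⁻ p, f p.2 ∂(μn n : Measure (Euc d₁ × S))
        = ∫⁻ q, (G (yn n) q : ℝ≥0∞) ∂(μn n : Measure (Euc d₁ × S)) := by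
      intro n
      have h1 : ∫⁻ p, f p.2 ∂(μn n : Measure (Euc d₁ × S))
          = ∫⁻ x, f x ∂((μn n : Measure (Euc d₁ × S)).map Prod.snd) := by
        rw [lintegral_map (hfm f) measurable_snd]
      rw [h1, hbindn n, Measure.lintegral_bind (hκmeas (yn n)).aemeasurable (hfm f).aemeasurable]
      exact lintegral_congr fun q => (hGcoe (yn n) q).symm
    -- compact set carrying all the measures μn
    set Kc : Set (Euc d₁ × S) := closedBall (0 : Euc d₁) R ×ˢ (Set.univ : Set S) with hKc
    have hKcomp : IsCompact Kc := (isCompact_closedBall _ _).prod isCompact_univ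
    haveI : CompactSpace Kc := isCompact_iff_compactSpace.mp hKcomp
    set Φ : C(Euc d₂, C(Kc, ℝ≥0)) := ContinuousMap.curry
      ⟨fun p : Euc d₂ × Kc => G p.1 (p.2 : Euc d₁ × S),
        hHcont.comp (continuous_fst.prodMk (continuous_subtype_val.comp continuous_snd))⟩ with hΦ
    have hUC : TendstoUniformly (fun n (q : Kc) => G (yn n) (q : Euc d₁ × S))
        (fun q : Kc => G y (q : Euc d₁ × S)) atTop := by
      have h := (Φ.continuous.tendsto y).comp hy
      rw [ContinuousMap.tendsto_iff_tendstoUniformly] at h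
      exact h
    have haemem : ∀ n, ∀ᵐ q ∂(μn n : Measure (Euc d₁ × S)), q ∈ Kc := by
      intro n
      have h1 : (μn n : Measure (Euc d₁ × S)) Kc = 1 := by
        refine le_antisymm prob_le_one ?_
        calc (1:ℝ≥0∞) = (μn n : Measure (Euc d₁ × S)) (lam (yn n) ×ˢ (Set.univ : Set S)) :=
              (hμn1 n).symm
          _ ≤ _ := measure_mono (Set.prod_mono (hsub _ (hMyn n)) subset_rfl)
      rw [MeasureTheory.ae_iff]
      have h2 : {a : Euc d₁ × S | ¬ a ∈ Kc} = Kcᶜ := rfl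
      rw [h2, measure_compl hKcomp.isClosed.measurableSet (measure_ne_top _ _), h1, measure_univ,
        tsub_self]
    have hae : ∀ ε : ℝ≥0, 0 < ε → ∀ᶠ n in atTop, ∀ᵐ q ∂(μn n : Measure (Euc d₁ × S)),
        G (yn n) q ≤ G y q + ε ∧ G y q ≤ G (yn n) q + ε := by
      intro ε hε
      have hεR : (0:ℝ) < ε := hε
      refine ((Metric.tendstoUniformly_iff.mp hUC) ε hεR).mono fun n hn => ?_
      refine (haemem n).mono fun q hq => ?_
      have hd := hn ⟨q, hq⟩
      rw [NNReal.dist_eq, abs_sub_lt_iff] at hd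
      constructor
      · rw [← NNReal.coe_le_coe]
        push_cast
        linarith [hd.1, hd.2]
      · rw [← NNReal.coe_le_coe]
        push_cast
        linarith [hd.1, hd.2]
    have hRHS := aux_lim μn μ hlim (fun n => G (yn n)) (G y) hae
    have hf2 : Tendsto (fun n => ∫⁻ p, f p.2 ∂(μn n : Measure (Euc d₁ × S))) atTop
        (𝓝 (∫⁻ p, f p.2 ∂(μ : Measure (Euc d₁ × S)))) := by
      have h := ProbabilityMeasure.tendsto_iff_forall_lintegral_tendsto.mp hlim
        (f.compContinuous (⟨Prod.snd, continuous_snd⟩ : C(Euc d₁ × S, S)))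
      simpa using h
    have hEq : ∫⁻ p, f p.2 ∂(μ : Measure (Euc d₁ × S))
        = ∫⁻ q, (G y q : ℝ≥0∞) ∂(μ : Measure (Euc d₁ × S)) := by
      refine tendsto_nhds_unique ?_ hRHS
      exact hf2.congr fun n => hchain n
    calc ∫⁻ x, f x ∂((μ : Measure (Euc d₁ × S)).map Prod.snd)
        = ∫⁻ p, f p.2 ∂(μ : Measure (Euc d₁ × S)) := lintegral_map (hfm f) measurable_snd
      _ = ∫⁻ q, (G y q : ℝ≥0∞) ∂(μ : Measure (Euc d₁ × S)) := hEq
      _ = ∫⁻ q, (∫⁻ x, f x ∂(Pi (q.1, y) q.2 : Measure S)) ∂(μ : Measure (Euc d₁ × S)) :=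
          lintegral_congr fun q => hGcoe y q
      _ = ∫⁻ x, f x
            ∂((μ : Measure (Euc d₁ × S)).bind (fun q => (Pi (q.1, y) q.2 : Measure S))) :=
          (Measure.lintegral_bind (hκmeas y).aemeasurable (hfm f).aemeasurable).symm
  refine ⟨part1, fun A hA => ?_⟩
  rw [hbind]
  exact Measure.bind_apply hA (hκmeas y).aemeasurable
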